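/- Let d, L ∈ ℕ, and let H be a bounded selfadjoint operator on ℓ²(ℤ^d, ℂ^L) whose matrix elements h(x, y) = ⟨x|H|y⟩ ∈ M_L(ℂ) satisfy: (finite range) h(x, y) = 0 whenever max_{1≤j≤d} |x_j − y_j| > R, and (periodicity) h(x + p_j e_j, y + p_j e_j) = h(x, y) for periods p_j ∈ ℕ and the standard unit vectors e_j, for all j = 1, …, d. Let ρ ∈ ℕ be such that 2ρ is an integer multiple of each p_j, and let H^per_ρ be the Hermitian matrix indexed by {−ρ+1, …, ρ}^d × {1, …, L} with entries H^per_ρ(x, y) = ∑_{a ∈ ℤ^d} h(x, y + 2ρa) (a finite sum by finite range). Then the spectrum of the matrix H^per_ρ is contained in the spectrum of the bounded operator H. -/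

import Mathlib

noncomputable section

/-- The Hilbert space `ℓ²(ℤ^d, ℂ^L)`. -/
abbrev Ell2 (d L : ℕ) := lp (fun _ : (Fin d → ℤ) × Fin L => ℂ) 2

/-- The matrix element `⟨x, i| H |y, l⟩` of an operator `H` on `ℓ²(ℤ^d, ℂ^L)`. -/
def matElem {d L : ℕ} (H : Ell2 d L →L[ℂ] Ell2 d L) (x y : Fin d → ℤ) (i l : Fin L) : ℂ :=
  inner ℂ (lp.single 2 (x, i) (1 : ℂ)) (H (lp.single 2 (y, l) (1 : ℂ)))

/-- The identification of `Fin (2ρ)` with `{-ρ+1, …, ρ} ⊆ ℤ`. -/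
def idxZ (ρ : ℕ) (t : Fin (2 * ρ)) : ℤ := (t : ℤ) - ρ + 1

/-- The finite-volume restriction `H^per_ρ` of `H` with periodic boundary conditions,
with entries `H^per_ρ(x, y) = ∑_{a ∈ ℤ^d} ⟨x|H|y + 2ρa⟩` (a finite sum for a finite
range operator). -/
def perMat {d L : ℕ} (H : Ell2 d L →L[ℂ] Ell2 d L) (ρ : ℕ) :
    Matrix ((Fin d → Fin (2 * ρ)) × Fin L) ((Fin d → Fin (2 * ρ)) × Fin L) ℂ :=
  fun x y => ∑ᶠ a : Fin d → ℤ,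
    matElem H (fun j => idxZ ρ (x.1 j)) (fun j => idxZ ρ (y.1 j) + 2 * ρ * a j) x.2 y.2

open scoped ENNReal

namespace Stmt9Aux

variable {d L : ℕ}

lemma single_inner (k : (Fin d → ℤ) × Fin L) (f : Ell2 d L) :
    (inner ℂ (lp.single 2 k (1:ℂ)) f : ℂ) = f k := by
  rw [lp.inner_single_left]
  simp [RCLike.inner_apply]

lemma apply_single (H : Ell2 d L →L[ℂ] Ell2 d L) (x y : Fin d → ℤ) (i l : Fin L) :
    (H (lp.single 2 (y, l) (1:ℂ))) (x, i) = matElem H x y i l :=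
  (single_inner _ _).symm

lemma single_apply' (k k' : (Fin d → ℤ) × Fin L) (c : ℂ) :
    (lp.single 2 k c : Ell2 d L) k' = if k' = k then c else 0 := by
  rw [lp.single_apply]
  split_ifs with h
  · subst h; simp
  · simp [h]

lemma matElem_norm_le (H : Ell2 d L →L[ℂ] Ell2 d L) (x y : Fin d → ℤ) (i l : Fin L) :
    ‖matElem H x y i l‖ ≤ ‖H‖ := by
  have h1 : ‖(lp.single 2 (x, i) (1:ℂ) : Ell2 d L)‖ = 1 := by
    simpa using lp.norm_single (p := 2) (by norm_num) (fun _ : (Fin d → ℤ) × Fin L => (1:ℂ)) (x, i)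
  have h2 : ‖(lp.single 2 (y, l) (1:ℂ) : Ell2 d L)‖ = 1 := by
    simpa using lp.norm_single (p := 2) (by norm_num) (fun _ : (Fin d → ℤ) × Fin L => (1:ℂ)) (y, l)
  calc ‖matElem H x y i l‖
      ≤ ‖(lp.single 2 (x, i) (1:ℂ) : Ell2 d L)‖ * ‖H (lp.single 2 (y, l) (1:ℂ))‖ :=
        norm_inner_le_norm _ _
    _ = ‖H (lp.single 2 (y, l) (1:ℂ))‖ := by rw [h1, one_mul]
    _ ≤ ‖H‖ * ‖(lp.single 2 (y, l) (1:ℂ) : Ell2 d L)‖ := H.le_opNorm _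
    _ = ‖H‖ := by rw [h2, mul_one]

lemma norm_sq_eq (f : Ell2 d L) : ‖f‖ ^ 2 = ∑' k, ‖f k‖ ^ 2 := by
  have h := lp.norm_rpow_eq_tsum (p := 2) (E := fun _ : (Fin d → ℤ) × Fin L => ℂ)
    (by norm_num) f
  have h2 : (2 : ℝ≥0∞).toReal = (2 : ℝ) := by norm_num
  rw [h2] at h
  calc ‖f‖ ^ 2 = ‖f‖ ^ (2:ℝ) := by rw [← Real.rpow_natCast ‖f‖ 2]; norm_num
    _ = ∑' k, ‖f k‖ ^ (2:ℝ) := h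
    _ = ∑' k, ‖f k‖ ^ 2 := by
        congr 1; funext k; rw [← Real.rpow_natCast ‖f k‖ 2]; norm_num

lemma summable_norm_sq (f : Ell2 d L) : Summable (fun k => ‖f k‖ ^ 2) := by
  have h := (lp.memℓp f).summable (p := 2) (by norm_num)
  have : (fun k => ‖f k‖ ^ (2 : ℝ≥0∞).toReal) = fun k => ‖f k‖ ^ 2 := by
    funext k
    have : (2 : ℝ≥0∞).toReal = (2 : ℝ) := by norm_num
    rw [this, ← Real.rpow_natCast ‖f k‖ 2]; norm_num
  rwa [this] at h

lemma sum_sq_le (f : Ell2 d L) (S : Finset ((Fin d → ℤ) × Fin L)) :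
    ∑ k ∈ S, ‖f k‖ ^ 2 ≤ ‖f‖ ^ 2 := by
  rw [norm_sq_eq]
  exact Summable.sum_le_tsum S (fun k _ => by positivity) (summable_norm_sq f)

lemma norm_sq_le_of_support (f : Ell2 d L) (S : Finset ((Fin d → ℤ) × Fin L))
    (h : ∀ k ∉ S, f k = 0) : ‖f‖ ^ 2 ≤ ∑ k ∈ S, ‖f k‖ ^ 2 := by
  rw [norm_sq_eq, tsum_eq_sum (f := fun k => ‖f k‖^2) (s := S)
    (fun k hk => by simp [h k hk])]

section shift
variable (H : Ell2 d L →L[ℂ] Ell2 d L) (p : Fin d → ℕ)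
variable (hper : ∀ (j : Fin d) x y i l,
      matElem H (x + (p j : ℤ) • Pi.single j 1) (y + (p j : ℤ) • Pi.single j 1) i l =
        matElem H x y i l)
include hper

lemma shift_int (j : Fin d) (m : ℤ) (x y : Fin d → ℤ) (i l : Fin L) :
    matElem H (x + (m * p j) • Pi.single j 1) (y + (m * p j) • Pi.single j 1) i l =
      matElem H x y i l := by
  have hdown : ∀ x y : Fin d → ℤ, ∀ i l, matElem H (x - (p j : ℤ) • Pi.single j 1)
      (y - (p j : ℤ) • Pi.single j 1) i l = matElem H x y i l := by
    intro x y i l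
    conv_rhs => rw [← sub_add_cancel x ((p j : ℤ) • Pi.single j 1),
      ← sub_add_cancel y ((p j : ℤ) • Pi.single j 1)]
    rw [hper]
  induction m using Int.induction_on with
  | zero => simp
  | succ m ih =>
      have e : ∀ z : Fin d → ℤ, z + (((m : ℤ) + 1) * p j) • (Pi.single j 1 : Fin d → ℤ)
          = (z + ((m : ℤ) * p j) • Pi.single j 1) + (p j : ℤ) • Pi.single j 1 := by
        intro z
        rw [add_assoc, ← add_smul]
        ring_nf
      rw [e x, e y, hper, ih]
  | pred m ih =>
      have e : ∀ z : Fin d → ℤ, z + ((-(m : ℤ) - 1) * p j) • (Pi.single j 1 : Fin d → ℤ)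
          = (z + (-(m : ℤ) * p j) • Pi.single j 1) - (p j : ℤ) • Pi.single j 1 := by
        intro z
        rw [add_sub_assoc, ← sub_smul]
        ring_nf
      rw [e x, e y, hdown, ih]

lemma shift_vec (c : Fin d → ℤ) (hc : ∀ j, (p j : ℤ) ∣ c j) (x y : Fin d → ℤ) (i l : Fin L) :
    matElem H (x + c) (y + c) i l = matElem H x y i l := by
  have key : ∀ s : Finset (Fin d),
      matElem H (x + ∑ j ∈ s, Pi.single j (c j)) (y + ∑ j ∈ s, Pi.single j (c j)) i l =
        matElem H x y i l := by
    intro s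
    induction s using Finset.induction_on with
    | empty => simp
    | @insert j s hj ih =>
        rw [Finset.sum_insert hj]
        obtain ⟨m, hm⟩ := hc j
        have hsingle : (Pi.single j (c j) : Fin d → ℤ) = (m * p j) • Pi.single j 1 := by
          funext j'
          by_cases h : j' = j
          · subst h; simp [Pi.single_apply, hm, mul_comm]
          · simp [Pi.single_apply, h]
        have e1 : x + (Pi.single j (c j) + ∑ j' ∈ s, Pi.single j' (c j'))
            = (x + ∑ j' ∈ s, Pi.single j' (c j')) + (m * p j) • Pi.single j 1 := by
          rw [hsingle]; ring
        have e2 : y + (Pi.single j (c j) + ∑ j' ∈ s, Pi.single j' (c j'))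
            = (y + ∑ j' ∈ s, Pi.single j' (c j')) + (m * p j) • Pi.single j 1 := by
          rw [hsingle]; ring
        rw [e1, e2, shift_int H p hper, ih]
  have := key Finset.univ
  rwa [Finset.univ_sum_single] at this

end shift

lemma pow_sub_pow_le (e : ℕ) (a b : ℤ) (hb : 0 ≤ b) (hab : b ≤ a) :
    a ^ (e + 1) - b ^ (e + 1) ≤ (e + 1) * (a - b) * a ^ e := by
  induction e with
  | zero => simp
  | succ e ih =>
      have ha : 0 ≤ a := hb.trans hab
      have hpow : b ^ (e + 1) ≤ a ^ (e + 1) := pow_le_pow_left₀ hb hab _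
      have key : a ^ (e + 2) - b ^ (e + 2)
          = a * (a ^ (e + 1) - b ^ (e + 1)) + b ^ (e + 1) * (a - b) := by ring
      rw [key]
      have h1 : a * (a ^ (e + 1) - b ^ (e + 1)) ≤ a * ((e + 1) * (a - b) * a ^ e) :=
        mul_le_mul_of_nonneg_left ih ha
      have h2 : b ^ (e + 1) * (a - b) ≤ a ^ (e + 1) * (a - b) :=
        mul_le_mul_of_nonneg_right hpow (by omega)
      have : a * ((e + 1) * (a - b) * a ^ e) + a ^ (e + 1) * (a - b)
          = (↑(e + 1) + 1) * (a - b) * a ^ (e + 1) := by push_cast; ring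
      omega

lemma nat_pow_sub_pow_le (e : ℕ) (a b : ℕ) (hab : b ≤ a) :
    a ^ (e + 1) - b ^ (e + 1) ≤ (e + 1) * (a - b) * a ^ e := by
  have h := pow_sub_pow_le e (a : ℤ) (b : ℤ) (by positivity) (by exact_mod_cast hab)
  have hpow : (b : ℕ) ^ (e+1) ≤ a ^ (e+1) := Nat.pow_le_pow_left hab _
  zify [hpow, hab]
  exact h

lemma mem_boxIcc {d : ℕ} (a b x : Fin d → ℤ) :
    x ∈ Finset.Icc a b ↔ ∀ j, a j ≤ x j ∧ x j ≤ b j := by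
  simp [Finset.mem_Icc, Pi.le_def, forall_and]

lemma card_boxIcc {d : ℕ} (a b : Fin d → ℤ) :
    (Finset.Icc a b).card = ∏ j, (b j + 1 - a j).toNat := by
  rw [Pi.card_Icc]
  congr 1
  funext j
  rw [Int.card_Icc]

end Stmt9Aux

set_option maxHeartbeats 1000000 in
/-- for a bounded selfadjoint finite range periodic operator `H` on
`ℓ²(ℤ^d, ℂ^L)` and `ρ` such that `2ρ` is a multiple of all periods, the spectrum of the
periodized matrix `H^per_ρ` is contained in the spectrum of `H`. -/
theorem stmt9 {d L : ℕ} (R : ℕ) (H : Ell2 d L →L[ℂ] Ell2 d L)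
    (hH : IsSelfAdjoint H)
    (hrange : ∀ x y i l, (∃ j, (R : ℤ) < |x j - y j|) → matElem H x y i l = 0)
    (p : Fin d → ℕ) (hp : ∀ j, 0 < p j)
    (hper : ∀ (j : Fin d) x y i l,
      matElem H (x + (p j : ℤ) • Pi.single j 1) (y + (p j : ℤ) • Pi.single j 1) i l =
        matElem H x y i l)
    (ρ : ℕ) (hρ : ∀ j, (p j : ℤ) ∣ 2 * ρ) :
    spectrum ℂ (perMat H ρ) ⊆ spectrum ℂ H := by
  classical
  open Stmt9Aux in
  intro μ hμ
  -- trivial case: empty index type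
  by_cases hne : Nonempty ((Fin d → Fin (2 * ρ)) × Fin L)
  swap
  · exfalso
    rw [not_nonempty_iff] at hne
    haveI : Subsingleton (Matrix ((Fin d → Fin (2 * ρ)) × Fin L)
        ((Fin d → Fin (2 * ρ)) × Fin L) ℂ) :=
      ⟨fun a b => by funext k; exact hne.elim k⟩
    exact (spectrum.mem_iff.mp hμ) (isUnit_of_subsingleton _)
  by_contra hs
  -- the resolvent
  have hunit : IsUnit (algebraMap ℂ (Ell2 d L →L[ℂ] Ell2 d L) μ - H) :=
    spectrum.notMem_iff.mp hs
  obtain ⟨u, hu⟩ := hunit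
  set B : Ell2 d L →L[ℂ] Ell2 d L := ((u⁻¹ : _ˣ) : Ell2 d L →L[ℂ] Ell2 d L) with hB
  have hub : ∀ w : Ell2 d L, ‖w‖ ≤ ‖B‖ * ‖μ • w - H w‖ := by
    intro w
    have happ : (algebraMap ℂ (Ell2 d L →L[ℂ] Ell2 d L) μ - H) w = μ • w - H w := by
      simp [Algebra.algebraMap_eq_smul_one, ContinuousLinearMap.sub_apply]
    have hw : w = B ((algebraMap ℂ (Ell2 d L →L[ℂ] Ell2 d L) μ - H) w) := by
      rw [← hu, hB]
      have : ((u⁻¹ : _ˣ) : Ell2 d L →L[ℂ] Ell2 d L) ((u : Ell2 d L →L[ℂ] Ell2 d L) w)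
          = (((u⁻¹ * u : _ˣ) : Ell2 d L →L[ℂ] Ell2 d L)) w := by
        rfl
      rw [this, inv_mul_cancel, Units.val_one, ContinuousLinearMap.one_apply]
    calc ‖w‖ = ‖B ((algebraMap ℂ (Ell2 d L →L[ℂ] Ell2 d L) μ - H) w)‖ := by rw [← hw]
      _ ≤ ‖B‖ * ‖(algebraMap ℂ (Ell2 d L →L[ℂ] Ell2 d L) μ - H) w‖ := B.le_opNorm _
      _ = ‖B‖ * ‖μ • w - H w‖ := by rw [happ]
  -- the eigenvector
  haveI := hne
  haveI : Nonempty (Fin d → Fin (2 * ρ)) :=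
    ⟨(Classical.arbitrary ((Fin d → Fin (2 * ρ)) × Fin L)).1⟩
  obtain ⟨v, hv0, hveq⟩ : ∃ v : ((Fin d → Fin (2 * ρ)) × Fin L) → ℂ,
      v ≠ 0 ∧ (perMat H ρ).mulVec v = μ • v := by
    have h1 : μ ∈ spectrum ℂ (Matrix.toLinAlgEquiv' (perMat H ρ)) := by
      rw [AlgEquiv.spectrum_eq]
      exact hμ
    have h2 : Module.End.HasEigenvalue (Matrix.toLinAlgEquiv' (perMat H ρ)) μ :=
      Module.End.hasEigenvalue_iff_mem_spectrum.mpr h1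
    obtain ⟨v, hv⟩ := h2.exists_hasEigenvector
    refine ⟨v, hv.2, ?_⟩
    have := hv.apply_eq_smul
    rwa [Matrix.toLinAlgEquiv'_apply] at this
  have hveq' : ∀ k, (∑ k', perMat H ρ k k' * v k') = μ * v k := by
    intro k
    have := congrFun hveq k
    simpa [Matrix.mulVec, dotProduct] using this
  obtain ⟨k0, hk0⟩ : ∃ k0, v k0 ≠ 0 := Function.ne_iff.mp hv0
  set c : ℝ := ‖v k0‖ ^ 2 with hc
  have hcpos : 0 < c := by
    have := norm_pos_iff.mpr hk0
    positivity
  set Mv : ℝ := ∑ k, ‖v k‖ with hMv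
  have hMvle : ∀ k, ‖v k‖ ≤ Mv := fun k =>
    Finset.single_le_sum (fun k _ => norm_nonneg (v k)) (Finset.mem_univ k)
  have hMv0 : 0 ≤ Mv := le_trans (norm_nonneg _) (hMvle k0)
  set C : ℝ := ‖μ‖ * Mv + ((2*R+1)^d * L) * (‖H‖ * Mv) with hC
  have hC0 : 0 ≤ C := by positivity
  -- basic facts about `redZ`
  have hFin0 : ∀ (_ : Fin d), 0 < 2 * ρ := by
    intro j
    by_contra h
    have hρ0 : ρ = 0 := by omega
    subst hρ0
    exact (Classical.arbitrary (Fin d → Fin (2 * 0)) j).elim0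
  have hredlt : ∀ (z : Fin d → ℤ) (j : Fin d), ((z j + ρ - 1) % (2 * ρ : ℤ)).toNat < 2 * ρ := by
    intro z j
    have h2ρ : (0:ℤ) < 2 * ρ := by exact_mod_cast hFin0 j
    have hmod := Int.emod_lt_of_pos (z j + ρ - 1) h2ρ
    have hnn := Int.emod_nonneg (z j + ρ - 1) (by omega : (2 * ρ : ℤ) ≠ 0)
    omega
  set redZ : (Fin d → ℤ) → (Fin d → Fin (2 * ρ)) :=
    fun z j => ⟨((z j + ρ - 1) % (2 * ρ : ℤ)).toNat, hredlt z j⟩ with hredZ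
  set cell : (Fin d → ℤ) → (Fin d → ℤ) := fun z j => (z j + ρ - 1) / (2 * ρ : ℤ) with hcell
  have hidx : ∀ (z : Fin d → ℤ) (j : Fin d),
      idxZ ρ (redZ z j) = (z j + ρ - 1) % (2 * ρ : ℤ) + 1 - ρ := by
    intro z j
    have h2ρ : (0:ℤ) < 2 * ρ := by exact_mod_cast hFin0 j
    have hnn := Int.emod_nonneg (z j + ρ - 1) (by omega : (2 * ρ : ℤ) ≠ 0)
    simp only [idxZ, hredZ]
    rw [Int.toNat_of_nonneg hnn]
    ring
  have hidxrange : ∀ (t : Fin (2 * ρ)), 1 - (ρ:ℤ) ≤ idxZ ρ t ∧ idxZ ρ t ≤ ρ := by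
    intro t
    have := t.isLt
    unfold idxZ
    omega
  have hdecomp : ∀ (z : Fin d → ℤ) (j : Fin d),
      z j = idxZ ρ (redZ z j) + 2 * ρ * cell z j := by
    intro z j
    have h2ρ : (0:ℤ) < 2 * ρ := by exact_mod_cast hFin0 j
    have h := Int.mul_ediv_add_emod (z j + ρ - 1) (2 * ρ)
    rw [hidx z j]
    simp only [hcell]
    linarith
  have hred_translate : ∀ (t : Fin d → Fin (2 * ρ)) (b : Fin d → ℤ),
      redZ (fun j => idxZ ρ (t j) + 2 * ρ * b j) = t := by
    intro t b
    funext j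
    have h2ρ : (0:ℤ) < 2 * ρ := by exact_mod_cast hFin0 j
    apply Fin.ext
    show (((idxZ ρ (t j) + 2 * ρ * b j) + ρ - 1) % (2 * ρ : ℤ)).toNat = t j
    have e : (idxZ ρ (t j) + 2 * ρ * b j) + ρ - 1 = (t j : ℤ) + 2 * ρ * b j := by
      unfold idxZ; ring
    rw [e, Int.add_mul_emod_self_left, Int.emod_eq_of_lt (by positivity) (by exact_mod_cast (t j).isLt)]
    simp
  have hcell_translate : ∀ (t : Fin d → Fin (2 * ρ)) (b : Fin d → ℤ),
      cell (fun j => idxZ ρ (t j) + 2 * ρ * b j) = b := by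
    intro t b
    funext j
    have h2ρ : (0:ℤ) < 2 * ρ := by exact_mod_cast hFin0 j
    show ((idxZ ρ (t j) + 2 * ρ * b j) + ρ - 1) / (2 * ρ : ℤ) = b j
    have e : (idxZ ρ (t j) + 2 * ρ * b j) + ρ - 1 = (t j : ℤ) + 2 * ρ * b j := by
      unfold idxZ; ring
    rw [e, Int.add_mul_ediv_left _ _ (by omega : (2 * ρ : ℤ) ≠ 0),
      Int.ediv_eq_zero_of_lt (by positivity) (by exact_mod_cast (t j).isLt)]
    ring
  -- the key finite-volume estimate
  set shell : ℕ → Finset (Fin d → ℤ) := fun n =>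
    Finset.Icc (fun _ : Fin d => 1 - (ρ:ℤ) - R) (fun _ => 2*ρ*n - ρ + R) \
      Finset.Icc (fun _ : Fin d => 1 - (ρ:ℤ) + R) (fun _ => 2*ρ*n - ρ - R) with hshell
  have key : ∀ n : ℕ, 1 ≤ n → (n:ℝ)^d * c ≤ (‖B‖^2 * C^2) * (((shell n).card * L : ℕ) : ℝ) := by
    intro n hn
    set box : Finset (Fin d → ℤ) :=
      Finset.Icc (fun _ : Fin d => 1 - (ρ:ℤ)) (fun _ => 2*ρ*n - ρ) with hbox
    set w : Ell2 d L := ∑ k ∈ box ×ˢ Finset.univ, v (redZ k.1, k.2) • lp.single 2 k 1 with hw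
    have hwcoord : ∀ z : Fin d → ℤ, ∀ i : Fin L,
        (w : ∀ k : (Fin d → ℤ) × Fin L, ℂ) (z, i) = if z ∈ box then v (redZ z, i) else 0 := by
      intro z i
      rw [hw, lp.coeFn_sum, Finset.sum_apply]
      have hterm : ∀ k ∈ box ×ˢ (Finset.univ : Finset (Fin L)),
          (⇑(v (redZ k.1, k.2) • (lp.single 2 k 1 : Ell2 d L))) (z, i)
            = if (z, i) = k then v (redZ k.1, k.2) else 0 := by
        intro k _
        rw [lp.coeFn_smul, Pi.smul_apply, single_apply']
        split_ifs <;> simp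
      rw [Finset.sum_congr rfl hterm, Finset.sum_ite_eq (box ×ˢ Finset.univ) (z, i)
        (fun k => v (redZ k.1, k.2))]
      simp [Finset.mem_product]
    have hHwcoord : ∀ z : Fin d → ℤ, ∀ i : Fin L,
        (H w) (z, i) = ∑ k ∈ box ×ˢ (Finset.univ : Finset (Fin L)),
          v (redZ k.1, k.2) * matElem H z k.1 i k.2 := by
      intro z i
      rw [hw, map_sum, lp.coeFn_sum, Finset.sum_apply]
      refine Finset.sum_congr rfl fun k _ => ?_
      rw [map_smul, lp.coeFn_smul, Pi.smul_apply, smul_eq_mul]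
      congr 1
      exact apply_single H z k.1 i k.2
    set g : Ell2 d L := μ • w - H w with hg
    have hgcoord : ∀ z i, (g : ∀ k : (Fin d → ℤ) × Fin L, ℂ) (z, i)
        = μ * w (z, i) - (H w) (z, i) := by
      intro z i
      rw [hg, lp.coeFn_sub, Pi.sub_apply, lp.coeFn_smul, Pi.smul_apply, smul_eq_mul]
    -- coordinatewise bounds
    have hwbound : ∀ z i, ‖(w : ∀ k : (Fin d → ℤ) × Fin L, ℂ) (z, i)‖ ≤ Mv := by
      intro z i
      rw [hwcoord]
      split_ifs
      · exact hMvle _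
      · simpa using hMv0
    have hHwbound : ∀ z i, ‖(H w) (z, i)‖ ≤ ((2*R+1)^d * L) * (‖H‖ * Mv) := by
      intro z i
      rw [hHwcoord]
      set T : Finset ((Fin d → ℤ) × Fin L) :=
        (Finset.Icc (fun j => z j - (R:ℤ)) (fun j => z j + R) ×ˢ Finset.univ) ∩
          (box ×ˢ Finset.univ) with hT
      have hTsub : T ⊆ box ×ˢ Finset.univ := Finset.inter_subset_right
      have hzero : ∀ k ∈ box ×ˢ (Finset.univ : Finset (Fin L)), k ∉ T →
          v (redZ k.1, k.2) * matElem H z k.1 i k.2 = 0 := by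
        intro k hk hkT
        have hnmem : k.1 ∉ Finset.Icc (fun j => z j - (R:ℤ)) (fun j => z j + R) := by
          intro hmem
          exact hkT (Finset.mem_inter.mpr ⟨Finset.mem_product.mpr ⟨hmem, Finset.mem_univ _⟩, hk⟩)
        rw [mem_boxIcc] at hnmem
        push_neg at hnmem
        obtain ⟨j, hj⟩ := hnmem
        have h0 : matElem H z k.1 i k.2 = 0 := by
          apply hrange
          refine ⟨j, ?_⟩
          rcases le_or_gt (z j - (R:ℤ)) (k.1 j) with h1 | h1
          · have h2 := hj h1
            calc (R:ℤ) < -(z j - k.1 j) := by omega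
              _ ≤ |z j - k.1 j| := neg_le_abs _
          · calc (R:ℤ) < z j - k.1 j := by omega
              _ ≤ |z j - k.1 j| := le_abs_self _
        rw [h0, mul_zero]
      rw [← Finset.sum_subset hTsub hzero]
      have hcardT : T.card ≤ (2*R+1)^d * L := by
        calc T.card ≤ ((Finset.Icc (fun j => z j - (R:ℤ)) (fun j => z j + R)) ×ˢ
            (Finset.univ : Finset (Fin L))).card := Finset.card_le_card Finset.inter_subset_left
          _ = (2*R+1)^d * L := by
              rw [Finset.card_product, card_boxIcc]
              congr 1
              · have e1 : ∀ j : Fin d, ((z j + (R:ℤ)) + 1 - (z j - R)).toNat = 2*R+1 := by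
                  intro j
                  have : (z j + (R:ℤ)) + 1 - (z j - R) = ((2*R+1 : ℕ) : ℤ) := by push_cast; ring
                  rw [this, Int.toNat_natCast]
                rw [Finset.prod_congr rfl (fun j _ => e1 j)]
                simp [Finset.prod_const, Finset.card_univ]
              · simp [Finset.card_univ]
      calc ‖∑ k ∈ T, v (redZ k.1, k.2) * matElem H z k.1 i k.2‖
          ≤ ∑ k ∈ T, ‖v (redZ k.1, k.2) * matElem H z k.1 i k.2‖ := norm_sum_le _ _
        _ ≤ ∑ _k ∈ T, Mv * ‖H‖ := by
            refine Finset.sum_le_sum fun k _ => ?_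
            rw [norm_mul]
            exact mul_le_mul (hMvle _) (matElem_norm_le H z k.1 i k.2) (norm_nonneg _) hMv0
        _ = T.card * (Mv * ‖H‖) := by rw [Finset.sum_const, nsmul_eq_mul]
        _ ≤ ((2*R+1)^d * L : ℕ) * (Mv * ‖H‖) := by
            refine mul_le_mul_of_nonneg_right ?_ (by positivity)
            exact_mod_cast Nat.cast_le.mpr hcardT
        _ = ((2*R+1)^d * L) * (‖H‖ * Mv) := by push_cast; ring
    have hgbound : ∀ z i, ‖(g : ∀ k : (Fin d → ℤ) × Fin L, ℂ) (z, i)‖ ≤ C := by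
      intro z i
      rw [hgcoord]
      calc ‖μ * w (z,i) - H w (z,i)‖ ≤ ‖μ * w (z,i)‖ + ‖H w (z,i)‖ := norm_sub_le _ _
        _ ≤ ‖μ‖ * Mv + ((2*R+1)^d * L) * (‖H‖ * Mv) := by
            refine add_le_add ?_ (hHwbound z i)
            rw [norm_mul]
            exact mul_le_mul_of_nonneg_left (hwbound z i) (norm_nonneg μ)
        _ = C := hC.symm
    -- vanishing of g off the shell
    have hboxmem : ∀ z : Fin d → ℤ, z ∈ box ↔ ∀ j, 1 - (ρ:ℤ) ≤ z j ∧ z j ≤ 2*ρ*n - ρ :=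
      fun z => mem_boxIcc _ _ _
    have hG1 : ∀ z : Fin d → ℤ,
        z ∉ Finset.Icc (fun _ : Fin d => 1 - (ρ:ℤ) - R) (fun _ => 2*ρ*n - ρ + R) →
        ∀ i, (g : ∀ k : (Fin d → ℤ) × Fin L, ℂ) (z, i) = 0 := by
      intro z hz i
      rw [mem_boxIcc] at hz
      push_neg at hz
      obtain ⟨j, hj⟩ := hz
      have hzbox : z ∉ box := by
        rw [hboxmem]
        intro hmem
        have hm := hmem j
        rcases le_or_gt (1 - (ρ:ℤ) - R) (z j) with h1 | h1
        · have := hj h1; omega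
        · omega
      rw [hgcoord, hwcoord, if_neg hzbox, hHwcoord, mul_zero]
      rw [Finset.sum_eq_zero, sub_zero]
      intro k hk
      have hk1 : k.1 ∈ box := (Finset.mem_product.mp hk).1
      rw [hboxmem] at hk1
      have hjk := hk1 j
      have h0 : matElem H z k.1 i k.2 = 0 := by
        apply hrange
        refine ⟨j, ?_⟩
        rcases le_or_gt (1 - (ρ:ℤ) - R) (z j) with h1 | h1
        · have h2 := hj h1
          calc (R:ℤ) < z j - k.1 j := by omega
            _ ≤ |z j - k.1 j| := le_abs_self _
        · calc (R:ℤ) < -(z j - k.1 j) := by omega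
            _ ≤ |z j - k.1 j| := neg_le_abs _
      rw [h0, mul_zero]
    -- the interior identity
    have hG2 : ∀ z : Fin d → ℤ,
        z ∈ Finset.Icc (fun _ : Fin d => 1 - (ρ:ℤ) + R) (fun _ => 2*ρ*n - ρ - R) →
        ∀ i, (g : ∀ k : (Fin d → ℤ) × Fin L, ℂ) (z, i) = 0 := by
      intro z hz i
      rw [mem_boxIcc] at hz
      have hzbox : z ∈ box := by
        rw [hboxmem]
        intro j
        have := hz j
        omega
      set t0 : Fin d → Fin (2*ρ) := redZ z with ht0
      set b0 : Fin d → ℤ := cell z with hb0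
      set S : Finset (Fin d → ℤ) := Finset.Icc (fun j => -(b0 j)) (fun j => (n:ℤ) - 1 - b0 j)
        with hS
      have hdvd : ∀ b : Fin d → ℤ, ∀ j, (p j : ℤ) ∣ 2 * ρ * b j := fun b j =>
        Dvd.dvd.mul_right (hρ j) _
      have e1 : (fun j => idxZ ρ (t0 j)) + (fun j => 2*(ρ:ℤ)*b0 j) = z := by
        funext j
        show idxZ ρ (t0 j) + 2*ρ*b0 j = z j
        rw [ht0, hb0]
        exact (hdecomp z j).symm
      -- Step A : perMat entries as concrete finite sums
      have hA : ∀ t : Fin d → Fin (2*ρ), ∀ l : Fin L, perMat H ρ (t0, i) (t, l)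
          = ∑ a ∈ S, matElem H (fun j => idxZ ρ (t0 j))
              (fun j => idxZ ρ (t j) + 2*ρ*a j) i l := by
        intro t l
        have hv : ∀ a : Fin d → ℤ, a ∉ S →
            matElem H (fun j => idxZ ρ (t0 j)) (fun j => idxZ ρ (t j) + 2*ρ*a j) i l = 0 := by
          intro a ha
          rw [hS, mem_boxIcc] at ha
          push_neg at ha
          obtain ⟨j, hj⟩ := ha
          have hshift := shift_vec H p hper (fun j => 2*ρ*b0 j) (hdvd b0)
            (fun j => idxZ ρ (t0 j)) (fun j => idxZ ρ (t j) + 2*ρ*a j) i l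
          have e2 : (fun j => idxZ ρ (t j) + 2*(ρ:ℤ)*a j) + (fun j => 2*(ρ:ℤ)*b0 j)
              = fun j => idxZ ρ (t j) + 2*ρ*(a j + b0 j) := by
            funext j
            show idxZ ρ (t j) + 2*ρ*a j + 2*ρ*b0 j = _
            ring
          rw [e1, e2] at hshift
          rw [← hshift]
          apply hrange
          refine ⟨j, ?_⟩
          have hidxt := hidxrange (t j)
          have hzj := hz j
          rcases le_or_gt (-(b0 j)) (a j) with h1 | h1
          · have h2 := hj h1
            have h3 : (n:ℤ) ≤ a j + b0 j := by omega
            have h4 : 2*(ρ:ℤ)*n ≤ 2*ρ*(a j + b0 j) :=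
              mul_le_mul_of_nonneg_left h3 (by positivity)
            calc (R:ℤ) < -(z j - (idxZ ρ (t j) + 2*ρ*(a j + b0 j))) := by omega
              _ ≤ |z j - (idxZ ρ (t j) + 2*ρ*(a j + b0 j))| := neg_le_abs _
          · have h3 : a j + b0 j ≤ -1 := by omega
            have h4 : 2*(ρ:ℤ)*(a j + b0 j) ≤ 2*ρ*(-1) :=
              mul_le_mul_of_nonneg_left h3 (by positivity)
            calc (R:ℤ) < z j - (idxZ ρ (t j) + 2*ρ*(a j + b0 j)) := by omega
              _ ≤ |z j - (idxZ ρ (t j) + 2*ρ*(a j + b0 j))| := le_abs_self _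
        show (∑ᶠ a : Fin d → ℤ, matElem H (fun j => idxZ ρ (t0 j))
            (fun j => idxZ ρ (t j) + 2*ρ*a j) i l) = _
        refine finsum_eq_finset_sum_of_support_subset _ ?_
        intro a ha
        rw [Function.mem_support] at ha
        rw [Finset.mem_coe]
        by_contra hmem
        exact ha (hv a hmem)
      -- Step B : reindexing
      have heig := hveq' (t0, i)
      have hstep2 : ∑ q ∈ (Finset.univ : Finset ((Fin d → Fin (2*ρ)) × Fin L)) ×ˢ S,
          v q.1 * matElem H (fun j => idxZ ρ (t0 j))
            (fun j => idxZ ρ (q.1.1 j) + 2*ρ*q.2 j) i q.1.2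
          = ∑ k' : (Fin d → Fin (2*ρ)) × Fin L, perMat H ρ (t0, i) k' * v k' := by
        rw [Finset.sum_product]
        refine Finset.sum_congr rfl fun k' _ => ?_
        rw [hA k'.1 k'.2, Finset.sum_mul]
        refine Finset.sum_congr rfl fun a _ => ?_
        ring
      have hstep1 : ∑ k ∈ box ×ˢ (Finset.univ : Finset (Fin L)),
          v (redZ k.1, k.2) * matElem H z k.1 i k.2
          = ∑ q ∈ (Finset.univ : Finset ((Fin d → Fin (2*ρ)) × Fin L)) ×ˢ S,
            v q.1 * matElem H (fun j => idxZ ρ (t0 j))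
              (fun j => idxZ ρ (q.1.1 j) + 2*ρ*q.2 j) i q.1.2 := by
        refine Finset.sum_nbij' (fun k => ((redZ k.1, k.2), fun j => cell k.1 j - b0 j))
          (fun q => ((fun j => idxZ ρ (q.1.1 j) + 2*ρ*(q.2 j + b0 j)), q.1.2))
          ?_ ?_ ?_ ?_ ?_
        · intro k hk
          rw [Finset.mem_product]
          refine ⟨Finset.mem_univ _, ?_⟩
          rw [hS, mem_boxIcc]
          intro j
          have hk1 : k.1 ∈ box := (Finset.mem_product.mp hk).1
          have hcr : 0 ≤ cell k.1 j ∧ cell k.1 j < n := by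
            have h2ρpos : (0:ℤ) < 2*ρ := by exact_mod_cast hFin0 j
            rw [hboxmem] at hk1
            have hb := hk1 j
            have hcomm : (n:ℤ)*(2*ρ) = 2*ρ*n := by ring
            constructor
            · exact Int.ediv_nonneg (by omega) (by omega)
            · show (k.1 j + ρ - 1) / (2*ρ : ℤ) < n
              rw [Int.ediv_lt_iff_lt_mul h2ρpos]
              omega
          show -(b0 j) ≤ cell k.1 j - b0 j ∧ cell k.1 j - b0 j ≤ (n:ℤ) - 1 - b0 j
          omega
        · intro q hq
          rw [Finset.mem_product]
          refine ⟨?_, Finset.mem_univ _⟩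
          rw [hboxmem]
          intro j
          rw [Finset.mem_product, hS, mem_boxIcc] at hq
          have ha := hq.2 j
          have hidxt := hidxrange (q.1.1 j)
          have h2ρpos : (0:ℤ) < 2*ρ := by exact_mod_cast hFin0 j
          have h5 : 0 ≤ 2*(ρ:ℤ)*(q.2 j + b0 j) :=
            mul_nonneg (by positivity) (by omega)
          have h6 : 2*(ρ:ℤ)*(q.2 j + b0 j) ≤ 2*ρ*(n-1) :=
            mul_le_mul_of_nonneg_left (by omega) (by positivity)
          have h7 : 2*(ρ:ℤ)*(n-1) = 2*ρ*n - 2*ρ := by ring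
          show 1 - (ρ:ℤ) ≤ idxZ ρ (q.1.1 j) + 2*ρ*(q.2 j + b0 j) ∧
            idxZ ρ (q.1.1 j) + 2*ρ*(q.2 j + b0 j) ≤ 2*ρ*n - ρ
          omega
        · intro k hk
          have hk1 : k.1 ∈ box := (Finset.mem_product.mp hk).1
          have hfirst : (fun j => idxZ ρ (redZ k.1 j) + 2*(ρ:ℤ)*((cell k.1 j - b0 j) + b0 j))
              = k.1 := by
            funext j
            have := hdecomp k.1 j
            show idxZ ρ (redZ k.1 j) + 2*(ρ:ℤ)*((cell k.1 j - b0 j) + b0 j) = k.1 j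
            rw [sub_add_cancel]
            omega
          exact Prod.ext hfirst rfl
        · intro q hq
          have hfirst : redZ (fun j => idxZ ρ (q.1.1 j) + 2*(ρ:ℤ)*(q.2 j + b0 j)) = q.1.1 :=
            hred_translate q.1.1 _
          have hsecond : (fun j => cell (fun j' => idxZ ρ (q.1.1 j') + 2*(ρ:ℤ)*(q.2 j' + b0 j')) j
              - b0 j) = q.2 := by
            have := hcell_translate q.1.1 (fun j => q.2 j + b0 j)
            funext j
            show cell (fun j' => idxZ ρ (q.1.1 j') + 2*(ρ:ℤ)*(q.2 j' + b0 j')) j - b0 j = q.2 j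
            rw [this]
            ring
          refine Prod.ext ?_ hsecond
          exact Prod.ext hfirst rfl
        · intro k hk
          have hk1 : k.1 ∈ box := (Finset.mem_product.mp hk).1
          have hshift := shift_vec H p hper (fun j => 2*ρ*b0 j) (hdvd b0)
            (fun j => idxZ ρ (t0 j)) (fun j => idxZ ρ (redZ k.1 j) + 2*ρ*(cell k.1 j - b0 j))
            i k.2
          have e3 : (fun j => idxZ ρ (redZ k.1 j) + 2*(ρ:ℤ)*(cell k.1 j - b0 j))
              + (fun j => 2*(ρ:ℤ)*b0 j) = k.1 := by
            funext j
            show idxZ ρ (redZ k.1 j) + 2*(ρ:ℤ)*(cell k.1 j - b0 j) + 2*ρ*b0 j = k.1 j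
            have := hdecomp k.1 j
            have e4 : idxZ ρ (redZ k.1 j) + 2*(ρ:ℤ)*(cell k.1 j - b0 j) + 2*ρ*b0 j
                = idxZ ρ (redZ k.1 j) + 2*ρ*cell k.1 j := by ring
            omega
          rw [e1, e3] at hshift
          rw [← hshift]
      rw [hgcoord, hwcoord, if_pos hzbox, hHwcoord, hstep1, hstep2, heig]
      rw [ht0]
      ring
    -- support of g
    have hgsupp : ∀ k : (Fin d → ℤ) × Fin L, k ∉ (shell n) ×ˢ (Finset.univ : Finset (Fin L)) →
        (g : ∀ k : (Fin d → ℤ) × Fin L, ℂ) k = 0 := by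
      intro k hk
      rw [Finset.mem_product, not_and_or] at hk
      have hk1 : k.1 ∉ shell n := by
        rcases hk with h | h
        · exact h
        · exact absurd (Finset.mem_univ k.2) h
      rw [hshell, Finset.mem_sdiff, not_and_or, not_not] at hk1
      rcases hk1 with h | h
      · have := hG1 k.1 h k.2
        simpa using this
      · have := hG2 k.1 h k.2
        simpa using this
    -- lower bound for ‖w‖²
    have hlow : (n:ℝ)^d * c ≤ ‖w‖^2 := by
      set T : Finset (Fin d → ℤ) := Finset.Icc (fun _ : Fin d => (0:ℤ)) (fun _ => (n:ℤ) - 1)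
        with hTdef
      set emb : (Fin d → ℤ) → ((Fin d → ℤ) × Fin L) :=
        fun b => ((fun j => idxZ ρ (k0.1 j) + 2*ρ*b j), k0.2) with hembdef
      have hinj : Set.InjOn emb T := by
        intro b1 _ b2 _ h
        funext j
        have h2ρpos : (0:ℤ) < 2*ρ := by exact_mod_cast hFin0 j
        have h1 := congrFun (congrArg Prod.fst h) j
        simp only [hembdef] at h1
        have : 2*(ρ:ℤ)*b1 j = 2*ρ*b2 j := by omega
        exact mul_left_cancel₀ (by omega : (2*(ρ:ℤ)) ≠ 0) this
      have hcardT : T.card = n^d := by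
        rw [hTdef, card_boxIcc]
        have e1 : ∀ j : Fin d, ((n:ℤ) - 1 + 1 - 0).toNat = n := by
          intro j
          have : ((n:ℤ) - 1 + 1 - 0) = ((n:ℕ) : ℤ) := by ring
          rw [this, Int.toNat_natCast]
        rw [Finset.prod_congr rfl (fun j _ => e1 j)]
        simp [Finset.prod_const, Finset.card_univ]
      have hval : ∀ b ∈ T, ‖(w : ∀ k : (Fin d → ℤ) × Fin L, ℂ) (emb b)‖^2 = c := by
        intro b hb
        rw [hTdef, mem_boxIcc] at hb
        have hmem : (fun j => idxZ ρ (k0.1 j) + 2*(ρ:ℤ)*b j) ∈ box := by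
          rw [hboxmem]
          intro j
          have hidxt := hidxrange (k0.1 j)
          have hbj := hb j
          have h2ρpos : (0:ℤ) < 2*ρ := by exact_mod_cast hFin0 j
          have h5 : 0 ≤ 2*(ρ:ℤ)*b j := mul_nonneg (by positivity) (by omega)
          have h6 : 2*(ρ:ℤ)*b j ≤ 2*ρ*(n-1) :=
            mul_le_mul_of_nonneg_left (by omega) (by positivity)
          have : 2*(ρ:ℤ)*(n-1) = 2*ρ*n - 2*ρ := by ring
          constructor <;> omega
        show ‖(w : ∀ k : (Fin d → ℤ) × Fin L, ℂ)
          ((fun j => idxZ ρ (k0.1 j) + 2*(ρ:ℤ)*b j), k0.2)‖^2 = c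
        rw [hwcoord, if_pos hmem, hred_translate k0.1 b]
      calc (n:ℝ)^d * c = ∑ k ∈ T.image emb, ‖(w : ∀ k : (Fin d → ℤ) × Fin L, ℂ) k‖^2 := by
            rw [Finset.sum_image (fun b1 h1 b2 h2 h => hinj h1 h2 h)]
            rw [Finset.sum_congr rfl hval, Finset.sum_const, hcardT, nsmul_eq_mul]
            push_cast
            ring
        _ ≤ ‖w‖^2 := sum_sq_le w _
    -- upper bound for ‖g‖²
    have hup : ‖g‖^2 ≤ ((shell n).card * L : ℕ) * C^2 := by
      calc ‖g‖^2 ≤ ∑ k ∈ (shell n) ×ˢ (Finset.univ : Finset (Fin L)),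
            ‖(g : ∀ k : (Fin d → ℤ) × Fin L, ℂ) k‖^2 := norm_sq_le_of_support g _ hgsupp
        _ ≤ ∑ _k ∈ (shell n) ×ˢ (Finset.univ : Finset (Fin L)), C^2 := by
            refine Finset.sum_le_sum fun k _ => ?_
            refine pow_le_pow_left₀ (norm_nonneg _) ?_ 2
            exact hgbound k.1 k.2
        _ = ((shell n).card * L : ℕ) * C^2 := by
            rw [Finset.sum_const, Finset.card_product, nsmul_eq_mul, Finset.card_univ,
              Fintype.card_fin]
    -- putting it together
    have hnorm : ‖w‖ ≤ ‖B‖ * ‖g‖ := by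
      rw [hg]
      exact hub w
    calc (n:ℝ)^d * c ≤ ‖w‖^2 := hlow
      _ ≤ (‖B‖ * ‖g‖)^2 := pow_le_pow_left₀ (norm_nonneg _) hnorm 2
      _ = ‖B‖^2 * ‖g‖^2 := mul_pow _ _ _
      _ ≤ ‖B‖^2 * (((shell n).card * L : ℕ) * C^2) :=
          mul_le_mul_of_nonneg_left hup (sq_nonneg _)
      _ = (‖B‖^2 * C^2) * (((shell n).card * L : ℕ) : ℝ) := by ring
  -- endgame
  rcases Nat.eq_zero_or_pos d with hd0 | hdpos
  · subst hd0
    have h1 := key 1 le_rfl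
    have hse : shell 1 = ∅ := by
      rw [Finset.eq_empty_iff_forall_notMem]
      intro x hx
      rw [hshell, Finset.mem_sdiff] at hx
      exact hx.2 ((mem_boxIcc _ _ _).mpr (fun j => j.elim0))
    rw [hse] at h1
    have hz : ((Finset.card (∅ : Finset (Fin 0 → ℤ)) * L : ℕ) : ℝ) = 0 := by
      rw [Finset.card_empty]
      simp
    rw [hz, mul_zero] at h1
    rw [pow_zero, one_mul] at h1
    linarith
  · obtain ⟨e, rfl⟩ : ∃ e, d = e + 1 := ⟨d - 1, by omega⟩
    have hρ1 : 1 ≤ ρ := by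
      have := hFin0 ⟨0, by omega⟩
      omega
    set Q : ℝ := ‖B‖ ^ 2 * C ^ 2 with hQ
    have hQ0 : 0 ≤ Q := by rw [hQ]; exact mul_nonneg (sq_nonneg _) (sq_nonneg _)
    set K0 : ℕ := ((e+1) * (4*R) * (2*ρ+2*R)^e) * L with hK0
    obtain ⟨N0, hN0⟩ := exists_nat_gt (Q * K0 / c)
    set n : ℕ := N0 + R + 1 with hn
    have hn1 : 1 ≤ n := by omega
    have hRn : 2*R ≤ 2*ρ*n := by
      have h1 : R ≤ n := by omega
      have h2 : n ≤ ρ * n := Nat.le_mul_of_pos_left n hρ1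
      calc 2*R ≤ 2*(ρ*n) := by omega
        _ = 2*ρ*n := (mul_assoc 2 ρ n).symm
    -- the cardinality of the shell
    have hcard : (shell n).card = (2*ρ*n+2*R)^(e+1) - (2*ρ*n-2*R)^(e+1) := by
      rw [hshell]
      have hsub : Finset.Icc (fun _ : Fin (e+1) => 1 - (ρ:ℤ) + R) (fun _ => 2*ρ*n - ρ - R) ⊆
          Finset.Icc (fun _ : Fin (e+1) => 1 - (ρ:ℤ) - R) (fun _ => 2*ρ*n - ρ + R) := by
        intro x hx
        rw [mem_boxIcc] at hx ⊢
        intro j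
        have := hx j
        omega
      rw [Finset.card_sdiff_of_subset hsub, card_boxIcc, card_boxIcc]
      have e1 : ∀ j : Fin (e+1), ((2*(ρ:ℤ)*n - ρ + R) + 1 - (1 - ρ - R)).toNat = 2*ρ*n+2*R := by
        intro j
        have : (2*(ρ:ℤ)*n - ρ + R) + 1 - (1 - ρ - R) = ((2*ρ*n+2*R : ℕ) : ℤ) := by
          push_cast; ring
        rw [this, Int.toNat_natCast]
      have e2 : ∀ j : Fin (e+1), ((2*(ρ:ℤ)*n - ρ - R) + 1 - (1 - ρ + R)).toNat = 2*ρ*n-2*R := by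
        intro j
        have : (2*(ρ:ℤ)*n - ρ - R) + 1 - (1 - ρ + R) = ((2*ρ*n-2*R : ℕ) : ℤ) := by
          push_cast [hRn]; ring
        rw [this, Int.toNat_natCast]
      rw [Finset.prod_congr rfl (fun j _ => e1 j), Finset.prod_congr rfl (fun j _ => e2 j)]
      simp [Finset.prod_const, Finset.card_univ]
    have hcard2 : (shell n).card * L ≤ K0 * n^e := by
      have h1 : (2*ρ*n+2*R)^(e+1) - (2*ρ*n-2*R)^(e+1)
          ≤ (e+1) * ((2*ρ*n+2*R) - (2*ρ*n-2*R)) * (2*ρ*n+2*R)^e :=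
        nat_pow_sub_pow_le e _ _ (by omega)
      have h2 : (2*ρ*n+2*R) - (2*ρ*n-2*R) = 4*R := by omega
      have h3 : (2*ρ*n+2*R)^e ≤ ((2*ρ+2*R)*n)^e := Nat.pow_le_pow_left (by nlinarith) e
      have h4 : ((2*ρ+2*R)*n)^e = (2*ρ+2*R)^e * n^e := mul_pow _ _ _
      calc (shell n).card * L ≤ ((e+1) * (4*R) * ((2*ρ+2*R)^e * n^e)) * L := by
            rw [hcard]
            refine Nat.mul_le_mul_right L ?_
            calc (2*ρ*n+2*R)^(e+1) - (2*ρ*n-2*R)^(e+1)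
                ≤ (e+1) * (4*R) * (2*ρ*n+2*R)^e := by rw [← h2]; exact h1
              _ ≤ (e+1) * (4*R) * ((2*ρ+2*R)^e * n^e) := by
                  refine Nat.mul_le_mul_left _ ?_
                  rw [← h4]; exact h3
        _ = K0 * n^e := by rw [hK0]; ring
    have hkey := key n hn1
    have hchain : (n:ℝ)^(e+1) * c ≤ Q * (K0 * n^e : ℕ) := by
      refine hkey.trans ?_
      exact mul_le_mul_of_nonneg_left (Nat.cast_le.mpr hcard2) hQ0
    have hne' : (0:ℝ) < (n:ℝ)^e := by positivity
    have hfin : c * n ≤ Q * K0 := by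
      have h5 : (n:ℝ)^(e+1) * c = (c * n) * (n:ℝ)^e := by ring
      have h6 : (Q * (K0 * n^e : ℕ) : ℝ) = (Q * K0) * (n:ℝ)^e := by push_cast; ring
      rw [h5] at hchain
      rw [h6] at hchain
      exact le_of_mul_le_mul_right hchain hne'
    have hgt : Q * K0 < c * N0 := by
      rw [div_lt_iff₀ hcpos] at hN0
      calc Q * K0 < N0 * c := hN0
        _ = c * N0 := by ring
    have hmono : c * N0 ≤ c * n := by
      have : (N0:ℝ) ≤ n := by exact_mod_cast (by omega : N0 ≤ n)
      exact mul_le_mul_of_nonneg_left this hcpos.le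
    linarith
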